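/- Let λ₁,…,λₙ be reals with λₖλₗ > −1 for all k ≠ l, and let Ż be any real symmetric n×n matrix. Then the quantity p̈ = Σₖ ((−1+λₖ²)/(1+λₖ²)²) Żₖₖ² + Σ_{k≠l} ((λₖλₗ − 1)/((1+λₖ²)(1+λₗ²))) Ż_{kl}² + Σ_{k,l} (−2λₖλₗ/((1+λₖ²)(1+λₗ²))) Ż_{kl}² satisfies p̈ = −Σₖ Żₖₖ²/(1+λₖ²) − Σ_{k≠l} ((λₖλₗ+1)/((1+λₖ²)(1+λₗ²))) Ż_{kl}² ≤ 0. -/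

import Mathlib

theorem stmt_13 (n : ℕ) (l : Fin n → ℝ)
    (hl : ∀ k m, k ≠ m → -1 < l k * l m)
    (Z : Matrix (Fin n) (Fin n) ℝ) (hZ : Z.IsSymm) :
    (∑ k, ((-1 + l k ^ 2) / (1 + l k ^ 2) ^ 2) * Z k k ^ 2 +
      (∑ k, ∑ m, if k = m then 0 else
        ((l k * l m - 1) / ((1 + l k ^ 2) * (1 + l m ^ 2))) * Z k m ^ 2) +
      ∑ k, ∑ m, (-2 * l k * l m / ((1 + l k ^ 2) * (1 + l m ^ 2))) * Z k m ^ 2 =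
      -(∑ k, Z k k ^ 2 / (1 + l k ^ 2)) -
        ∑ k, ∑ m, if k = m then 0 else
          ((l k * l m + 1) / ((1 + l k ^ 2) * (1 + l m ^ 2))) * Z k m ^ 2) ∧
    (∑ k, ((-1 + l k ^ 2) / (1 + l k ^ 2) ^ 2) * Z k k ^ 2 +
      (∑ k, ∑ m, if k = m then 0 else
        ((l k * l m - 1) / ((1 + l k ^ 2) * (1 + l m ^ 2))) * Z k m ^ 2) +
      ∑ k, ∑ m, (-2 * l k * l m / ((1 + l k ^ 2) * (1 + l m ^ 2))) * Z k m ^ 2 ≤ 0) := by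
  have hpos : ∀ k, (0:ℝ) < 1 + l k ^ 2 := fun k => by positivity
  have hne : ∀ k, (1:ℝ) + l k ^ 2 ≠ 0 := fun k => (hpos k).ne'
  have key : ∑ k, ((-1 + l k ^ 2) / (1 + l k ^ 2) ^ 2) * Z k k ^ 2 +
      (∑ k, ∑ m, if k = m then 0 else
        ((l k * l m - 1) / ((1 + l k ^ 2) * (1 + l m ^ 2))) * Z k m ^ 2) +
      ∑ k, ∑ m, (-2 * l k * l m / ((1 + l k ^ 2) * (1 + l m ^ 2))) * Z k m ^ 2 =
      -(∑ k, Z k k ^ 2 / (1 + l k ^ 2)) -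
        ∑ k, ∑ m, if k = m then 0 else
          ((l k * l m + 1) / ((1 + l k ^ 2) * (1 + l m ^ 2))) * Z k m ^ 2 := by
    have h1 : ∑ k, ((-1 + l k ^ 2) / (1 + l k ^ 2) ^ 2) * Z k k ^ 2
        = ∑ k, ∑ m, if k = m then ((-1 + l k ^ 2) / (1 + l k ^ 2) ^ 2) * Z k k ^ 2 else 0 := by
      simp
    have h2 : -(∑ k, Z k k ^ 2 / (1 + l k ^ 2))
        = ∑ k, ∑ m, if k = m then -(Z k k ^ 2 / (1 + l k ^ 2)) else 0 := by
      simp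
    rw [h1, h2, ← Finset.sum_add_distrib, ← Finset.sum_add_distrib, sub_eq_add_neg,
      ← Finset.sum_neg_distrib, ← Finset.sum_add_distrib]
    refine Finset.sum_congr rfl fun k _ => ?_
    rw [← Finset.sum_add_distrib, ← Finset.sum_add_distrib, ← Finset.sum_neg_distrib,
      ← Finset.sum_add_distrib]
    refine Finset.sum_congr rfl fun m _ => ?_
    by_cases h : k = m
    · subst h
      simp only [if_pos rfl, ↓reduceIte]
      field_simp
      ring
    · simp only [if_neg h]
      field_simp
      ring
  refine ⟨key, ?_⟩
  rw [key]
  have t1 : (0:ℝ) ≤ ∑ k, Z k k ^ 2 / (1 + l k ^ 2) := by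
    refine Finset.sum_nonneg fun k _ => ?_
    positivity
  have t2 : (0:ℝ) ≤ ∑ k, ∑ m, if k = m then 0 else
      ((l k * l m + 1) / ((1 + l k ^ 2) * (1 + l m ^ 2))) * Z k m ^ 2 := by
    refine Finset.sum_nonneg fun k _ => Finset.sum_nonneg fun m _ => ?_
    by_cases h : k = m
    · simp [h]
    · simp only [if_neg h]
      have := hl k m h
      have : (0:ℝ) ≤ l k * l m + 1 := by linarith
      positivity
  linarith
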